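/- arXiv:0710.1147 — 3 statements merged into one kernel-verified Lean document; each statement's English description precedes it below -/
import Mathlib

section
/- Under conditions (2), for every k ≥ 3 and every z ∈ ℂ with |z| = r_k one has log|h(z)| ≤ 3 n_{k−1} log r_k, i.e. |h(z)| ≤ r_k^{3 n_{k−1}}. -/
open Filter Topology

/-- Under conditions (2), for every `k ≥ 3` and every `z` with `|z| = r_k` one has
`log |h(z)| ≤ 3 n_{k-1} log r_k`, i.e. `|h(z)| ≤ r_k^{3 n_{k-1}}`. -/
theorem log_abs_h_bound
    (r : ℕ → ℝ) (n : ℕ → ℕ) (h : ℂ → ℂ)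
    (hrpos : ∀ k, 1 ≤ k → 0 < r k)
    (hnpos : ∀ k, 1 ≤ k → 1 ≤ n k)
    (hr1 : 1 ≤ r 1)
    (hr : ∀ k, 2 ≤ k → 2 * r (k - 1) ≤ r k)
    (hnsum : ∀ k, 2 ≤ k → ∑ j ∈ Finset.Icc 1 (k - 1), n j ≤ n k)
    (hnr : ∀ k, 2 ≤ k → r k ^ (4 * n (k - 1)) ≤ (n k : ℝ))
    (hh : ∀ z : ℂ, Tendsto
      (fun m : ℕ => ∏ k ∈ Finset.Icc 1 m, (1 + (z / (r k : ℂ)) ^ (n k)))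
      atTop (nhds (h z))) :
    ∀ k, 3 ≤ k → ∀ z : ℂ, ‖z‖ = r k →
      Real.log (‖h z‖) ≤ (3 * n (k - 1) : ℝ) * Real.log (r k) ∧
      ‖h z‖ ≤ r k ^ (3 * n (k - 1)) := by
  -- r grows at least geometrically
  have hrgeo : ∀ i m, 1 ≤ i → (2:ℝ) ^ m * r i ≤ r (i + m) := by
    intro i m hi
    induction m with
    | zero => simp
    | succ m ih =>
      have hstep := hr (i + m + 1) (by omega)
      rw [show i + m + 1 - 1 = i + m from by omega] at hstep
      have hp := hrpos i hi
      calc (2:ℝ) ^ (m + 1) * r i = 2 * ((2:ℝ) ^ m * r i) := by ring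
        _ ≤ 2 * r (i + m) := by linarith
        _ ≤ r (i + (m + 1)) := by
            rw [show i + (m + 1) = i + m + 1 from rfl]; exact hstep
  have hrle : ∀ i j, 1 ≤ i → i ≤ j → r i ≤ r j := by
    intro i j hi hij
    have h1 := hrgeo i (j - i) hi
    rw [show i + (j - i) = j from by omega] at h1
    have h2 : (1:ℝ) ≤ 2 ^ (j - i) := one_le_pow₀ (by norm_num)
    nlinarith [hrpos i hi]
  have hr1' : ∀ i, 1 ≤ i → 1 ≤ r i := fun i hi => le_trans hr1 (hrle 1 i le_rfl hi)
  -- n is monotone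
  have hnmono : ∀ i j, 1 ≤ i → i ≤ j → n i ≤ n j := by
    intro i j hi hij
    induction j, hij using Nat.le_induction with
    | base => exact le_rfl
    | succ j hj ih =>
      have hs := hnsum (j + 1) (by omega)
      rw [show j + 1 - 1 = j from by omega] at hs
      have hmem : j ∈ Finset.Icc 1 j := by simp; omega
      have := Finset.single_le_sum (f := n) (fun _ _ => Nat.zero_le _) hmem
      omega
  -- n 2 ≥ 16
  have hn2 : 16 ≤ n 2 := by
    have h1 := hnr 2 le_rfl
    rw [show (2:ℕ) - 1 = 1 from rfl] at h1
    have hr2 : (2:ℝ) ≤ r 2 := by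
      have := hr 2 le_rfl
      rw [show (2:ℕ) - 1 = 1 from rfl] at this
      linarith
    have hn1 : 1 ≤ n 1 := hnpos 1 le_rfl
    have h2 : (2:ℝ) ^ 4 ≤ r 2 ^ (4 * n 1) :=
      le_trans (pow_le_pow_right₀ (by norm_num) (by omega))
        (pow_le_pow_left₀ (by norm_num) hr2 _)
    have : (16:ℝ) ≤ (n 2 : ℝ) := by norm_num at h2; linarith
    exact_mod_cast this
  intro k hk z hz
  have hkpos : 1 ≤ k := by omega
  have hrk1 : (1:ℝ) ≤ r k := hr1' k hkpos
  have hrkpos : (0:ℝ) < r k := hrpos k hkpos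
  have hn16 : 16 ≤ n (k - 1) := le_trans hn2 (hnmono 2 (k - 1) (by omega) (by omega))
  -- sum of the first k-1 exponents
  have hS : ∑ j ∈ Finset.Icc 1 (k - 1), n j ≤ 2 * n (k - 1) := by
    have hsplit : ∑ j ∈ Finset.Icc 1 (k - 2 + 1), n j
        = (∑ j ∈ Finset.Icc 1 (k - 2), n j) + n (k - 2 + 1) :=
      Finset.sum_Icc_succ_top (by omega) n
    have hs := hnsum (k - 1) (by omega)
    rw [show k - 1 - 1 = k - 2 from by omega] at hs
    rw [show k - 1 = k - 2 + 1 from by omega]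
    rw [hsplit, show k - 2 + 1 = k - 1 from by omega]
    omega
  -- per-factor bound
  set g : ℕ → ℝ := fun j =>
    if j < k then 2 * r k ^ n j else if j = k then 2 else Real.exp ((1/2:ℝ) ^ (j - k)) with hg
  have hg1 : ∀ j, (1:ℝ) ≤ g j := by
    intro j
    simp only [hg]
    split_ifs with h1 h2
    · have := one_le_pow₀ (n := n j) hrk1; linarith
    · norm_num
    · exact Real.one_le_exp (by positivity)
  have hfac : ∀ j, 1 ≤ j → ‖1 + (z / (r j : ℂ)) ^ n j‖ ≤ g j := by
    intro j hj
    have hrj := hrpos j hj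
    have habs : ‖1 + (z / (r j : ℂ)) ^ n j‖ ≤ 1 + (r k / r j) ^ n j := by
      calc ‖1 + (z / (r j : ℂ)) ^ n j‖
          ≤ ‖(1:ℂ)‖ + ‖(z / (r j : ℂ)) ^ n j‖ := norm_add_le _ _
        _ = 1 + (r k / r j) ^ n j := by
            rw [norm_one, norm_pow, norm_div, hz, Complex.norm_of_nonneg hrj.le]
    simp only [hg]
    rcases lt_trichotomy j k with hlt | heq | hgt
    · rw [if_pos hlt]
      have h1 : (r k / r j) ^ n j ≤ r k ^ n j :=
        pow_le_pow_left₀ (by positivity) (div_le_self hrkpos.le (hr1' j hj)) _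
      have h2 : (1:ℝ) ≤ r k ^ n j := one_le_pow₀ hrk1
      linarith
    · subst heq
      rw [if_neg (lt_irrefl _), if_pos rfl]
      rw [div_self hrkpos.ne', one_pow] at habs
      linarith
    · rw [if_neg (by omega), if_neg (by omega)]
      have hge : (2:ℝ) ^ (j - k) * r k ≤ r j := by
        have := hrgeo k (j - k) hkpos
        rwa [show k + (j - k) = j from by omega] at this
      have hx1 : r k / r j ≤ (1/2:ℝ) ^ (j - k) := by
        rw [div_le_iff₀ hrj]
        calc r k = (1/2:ℝ) ^ (j - k) * ((2:ℝ) ^ (j - k) * r k) := by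
              rw [← mul_assoc, ← mul_pow]; norm_num
          _ ≤ (1/2:ℝ) ^ (j - k) * r j := by
              exact mul_le_mul_of_nonneg_left hge (by positivity)
      have hx2 : (r k / r j) ^ n j ≤ (r k / r j) ^ 1 :=
        pow_le_pow_of_le_one (by positivity)
          (by rw [div_le_one hrj]; exact hrle k j hkpos (by omega)) (hnpos j hj)
      have : (1:ℝ) + (r k / r j) ^ n j ≤ 1 + (1/2:ℝ) ^ (j - k) := by
        rw [pow_one] at hx2; linarith
      calc ‖1 + (z / (r j : ℂ)) ^ n j‖ ≤ 1 + (1/2:ℝ) ^ (j - k) := le_trans habs this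
        _ ≤ Real.exp ((1/2:ℝ) ^ (j - k)) := by
            have := Real.add_one_le_exp ((1/2:ℝ) ^ (j - k)); linarith
  -- head product bound
  have hhead : ∏ j ∈ Finset.Icc 1 k, g j ≤ 2 ^ k * r k ^ (2 * n (k - 1)) := by
    have hsplit : ∏ j ∈ Finset.Icc 1 (k - 1 + 1), g j
        = (∏ j ∈ Finset.Icc 1 (k - 1), g j) * g (k - 1 + 1) :=
      Finset.prod_Icc_succ_top (by omega) g
    have hke : k - 1 + 1 = k := by omega
    rw [← hke, hsplit, hke]
    have hgk : g k = 2 := by simp [hg]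
    have hprod : ∏ j ∈ Finset.Icc 1 (k - 1), g j
        = 2 ^ (k - 1) * r k ^ (∑ j ∈ Finset.Icc 1 (k - 1), n j) := by
      have : ∀ j ∈ Finset.Icc 1 (k - 1), g j = 2 * r k ^ n j := by
        intro j hj
        simp only [Finset.mem_Icc] at hj
        simp only [hg]; rw [if_pos (by omega)]
      rw [Finset.prod_congr rfl this, Finset.prod_mul_distrib, Finset.prod_const,
        Finset.prod_pow_eq_pow_sum, Nat.card_Icc]
      norm_num
    rw [hgk, hprod]
    have h1 : r k ^ (∑ j ∈ Finset.Icc 1 (k - 1), n j) ≤ r k ^ (2 * n (k - 1)) :=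
      pow_le_pow_right₀ hrk1 hS
    have h2 : (2:ℝ) ^ (k - 1) * 2 = 2 ^ k := by
      rw [← pow_succ, show k - 1 + 1 = k from by omega]
    calc 2 ^ (k - 1) * r k ^ (∑ j ∈ Finset.Icc 1 (k - 1), n j) * 2
        = 2 ^ (k - 1) * 2 * r k ^ (∑ j ∈ Finset.Icc 1 (k - 1), n j) := by ring
      _ ≤ 2 ^ (k - 1) * 2 * r k ^ (2 * n (k - 1)) := by
          apply mul_le_mul_of_nonneg_left h1 (by positivity)
      _ = 2 ^ k * r k ^ (2 * n (k - 1)) := by rw [h2]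
  -- bound on all partial products
  have hbound : ∀ m : ℕ,
      ‖∏ j ∈ Finset.Icc 1 m, (1 + (z / (r j : ℂ)) ^ n j)‖
        ≤ 2 ^ k * r k ^ (2 * n (k - 1)) * Real.exp 2 := by
    intro m
    have hstep1 : ‖∏ j ∈ Finset.Icc 1 m, (1 + (z / (r j : ℂ)) ^ n j)‖
        ≤ ∏ j ∈ Finset.Icc 1 m, g j := by
      rw [norm_prod]
      exact Finset.prod_le_prod (fun j _ => norm_nonneg _)
        (fun j hj => hfac j (Finset.mem_Icc.mp hj).1)
    refine le_trans hstep1 ?_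
    rcases le_or_gt m k with hmk | hkm
    · -- m ≤ k : extend to Icc 1 k and use tail ≥ 1
      have hext : ∏ j ∈ Finset.Icc 1 m, g j ≤ ∏ j ∈ Finset.Icc 1 k, g j := by
        rw [show Finset.Icc 1 m = Finset.Ioc 0 m from (Finset.Icc_add_one_left_eq_Ioc 0 m).symm,
            show Finset.Icc 1 k = Finset.Ioc 0 k from (Finset.Icc_add_one_left_eq_Ioc 0 k).symm,
            ← Finset.prod_Ioc_consecutive g (Nat.zero_le m) hmk]
        have hone : (1:ℝ) ≤ ∏ j ∈ Finset.Ioc m k, g j := by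
          calc (1:ℝ) = ∏ _j ∈ Finset.Ioc m k, (1:ℝ) := (Finset.prod_const_one).symm
            _ ≤ ∏ j ∈ Finset.Ioc m k, g j :=
                Finset.prod_le_prod (fun _ _ => zero_le_one) (fun j _ => hg1 j)
        have hpos : (0:ℝ) ≤ ∏ j ∈ Finset.Ioc 0 m, g j :=
          Finset.prod_nonneg (fun j _ => le_trans zero_le_one (hg1 j))
        exact le_mul_of_one_le_right hpos hone
      refine le_trans hext (le_trans hhead ?_)
      exact le_mul_of_one_le_right (by positivity) (Real.one_le_exp (by norm_num))
    · -- k < m : split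
      rw [show Finset.Icc 1 m = Finset.Ioc 0 m from (Finset.Icc_add_one_left_eq_Ioc 0 m).symm,
          ← Finset.prod_Ioc_consecutive g (Nat.zero_le k) hkm.le,
          show Finset.Ioc 0 k = Finset.Icc 1 k from Finset.Icc_add_one_left_eq_Ioc 0 k]
      have htail : ∏ j ∈ Finset.Ioc k m, g j ≤ Real.exp 2 := by
        have hcongr : ∀ j ∈ Finset.Ioc k m, g j = Real.exp ((1/2:ℝ) ^ (j - k)) := by
          intro j hj
          simp only [Finset.mem_Ioc] at hj
          simp only [hg]; rw [if_neg (by omega), if_neg (by omega)]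
        rw [Finset.prod_congr rfl hcongr, ← Real.exp_sum]
        apply Real.exp_le_exp.mpr
        have : Finset.Ioc k m = Finset.Ico (k + 1) (m + 1) := by
          rw [← Finset.Icc_add_one_left_eq_Ioc, Finset.Ico_add_one_right_eq_Icc]
        rw [this, Finset.sum_Ico_eq_sum_range]
        calc ∑ i ∈ Finset.range (m + 1 - (k + 1)), (1/2:ℝ) ^ (k + 1 + i - k)
            ≤ ∑ i ∈ Finset.range (m + 1 - (k + 1)), (1/2:ℝ) ^ i := by
              apply Finset.sum_le_sum
              intro i _
              exact pow_le_pow_of_le_one (by norm_num) (by norm_num) (by omega)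
          _ ≤ 2 := sum_geometric_two_le _
      have hheadnn : (0:ℝ) ≤ ∏ j ∈ Finset.Icc 1 k, g j :=
        Finset.prod_nonneg (fun j _ => le_trans zero_le_one (hg1 j))
      have htailnn : (0:ℝ) ≤ ∏ j ∈ Finset.Ioc k m, g j :=
        Finset.prod_nonneg (fun j _ => le_trans zero_le_one (hg1 j))
      calc (∏ j ∈ Finset.Icc 1 k, g j) * ∏ j ∈ Finset.Ioc k m, g j
          ≤ (2 ^ k * r k ^ (2 * n (k - 1))) * Real.exp 2 :=
            mul_le_mul hhead htail htailnn (by positivity)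
        _ = 2 ^ k * r k ^ (2 * n (k - 1)) * Real.exp 2 := by ring
  -- pass to the limit
  have hlim : ‖h z‖ ≤ 2 ^ k * r k ^ (2 * n (k - 1)) * Real.exp 2 := by
    have htend : Tendsto
        (fun m : ℕ => ‖∏ j ∈ Finset.Icc 1 m, (1 + (z / (r j : ℂ)) ^ n j)‖)
        atTop (nhds (‖h z‖)) :=
      (continuous_norm.continuousAt).tendsto.comp (hh z)
    exact le_of_tendsto' htend hbound
  -- final numeric comparison
  have hfinal : (2:ℝ) ^ k * r k ^ (2 * n (k - 1)) * Real.exp 2 ≤ r k ^ (3 * n (k - 1)) := by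
    have hsplit : r k ^ (3 * n (k - 1)) = r k ^ (2 * n (k - 1)) * r k ^ (n (k - 1)) := by
      rw [← pow_add]; ring_nf
    have hkey : (2:ℝ) ^ k * Real.exp 2 ≤ r k ^ (n (k - 1)) := by
      have h2k : (2:ℝ) ^ (k - 1) ≤ r k := by
        have := hrgeo 1 (k - 1) le_rfl
        rw [show 1 + (k - 1) = k from by omega] at this
        nlinarith [one_le_pow₀ (n := k - 1) (by norm_num : (1:ℝ) ≤ 2)]
      have h1 : ((2:ℝ) ^ (k - 1)) ^ (n (k - 1)) ≤ r k ^ (n (k - 1)) :=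
        pow_le_pow_left₀ (by positivity) h2k _
      have h2 : (2:ℝ) ^ (k + 3) ≤ ((2:ℝ) ^ (k - 1)) ^ (n (k - 1)) := by
        rw [← pow_mul]
        apply pow_le_pow_right₀ (by norm_num)
        have : (k - 1) * 16 ≤ (k - 1) * n (k - 1) := Nat.mul_le_mul_left _ hn16
        omega
      have hexp : Real.exp 2 ≤ 8 := by
        have he := Real.exp_one_lt_d9
        have : Real.exp 2 = Real.exp 1 * Real.exp 1 := by
          rw [← Real.exp_add]; norm_num
        nlinarith [Real.exp_pos 1]
      have h3 : (2:ℝ) ^ k * Real.exp 2 ≤ 2 ^ k * 8 := by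
        nlinarith [pow_pos (show (0:ℝ) < 2 from by norm_num) k]
      have h4 : (2:ℝ) ^ k * 8 = 2 ^ (k + 3) := by rw [pow_add]; norm_num
      linarith
    rw [hsplit]
    nlinarith [pow_pos hrkpos (2 * n (k - 1)), Real.exp_pos 2,
      pow_pos (show (0:ℝ) < 2 from by norm_num) k]
  have hmain : ‖h z‖ ≤ r k ^ (3 * n (k - 1)) := le_trans hlim hfinal
  refine ⟨?_, hmain⟩
  have hlogpow : Real.log (r k ^ (3 * n (k - 1))) = (3 * n (k - 1) : ℝ) * Real.log (r k) := by
    rw [Real.log_pow]; push_cast; ring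
  rcases eq_or_lt_of_le (norm_nonneg (h z)) with h0 | h0
  · rw [← h0, Real.log_zero, ← hlogpow]
    apply Real.log_nonneg
    exact one_le_pow₀ hrk1
  · rw [← hlogpow]
    exact Real.log_le_log h0 hmain
end

section
/- Under conditions (2), for every k ≥ 3 and every z ∈ ℂ with |z| = r_k one has |h(z)| · r_k^{n_{k−1}} ≤ n_k; in particular, if h(z) ≠ 0, then the displacement of the Newton map satisfies (1/|h(z)|) · (n_k / (4π)) ≥ r_k^{n_{k−1}} / (4π). -/
open Filter Topology

/-- Under conditions (2), for every `k ≥ 3` and every `z` with `|z| = r_k` one has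
`|h(z)| · r_k^{n_{k-1}} ≤ n_k`; in particular, if `h(z) ≠ 0`, then the displacement
of the Newton map satisfies `(1/|h(z)|) · (n_k/(4π)) ≥ r_k^{n_{k-1}}/(4π)`. -/
theorem newton_displacement_lower_bound
    (r : ℕ → ℝ) (n : ℕ → ℕ) (h : ℂ → ℂ)
    (hrpos : ∀ k, 1 ≤ k → 0 < r k)
    (hnpos : ∀ k, 1 ≤ k → 1 ≤ n k)
    (hr1 : 1 ≤ r 1)
    (hr : ∀ k, 2 ≤ k → 2 * r (k - 1) ≤ r k)
    (hnsum : ∀ k, 2 ≤ k → ∑ j ∈ Finset.Icc 1 (k - 1), n j ≤ n k)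
    (hnr : ∀ k, 2 ≤ k → r k ^ (4 * n (k - 1)) ≤ (n k : ℝ))
    (hh : ∀ z : ℂ, Tendsto
      (fun m : ℕ => ∏ k ∈ Finset.Icc 1 m, (1 + (z / (r k : ℂ)) ^ (n k)))
      atTop (nhds (h z))) :
    ∀ k, 3 ≤ k → ∀ z : ℂ, ‖z‖ = r k →
      ‖h z‖ * r k ^ (n (k - 1)) ≤ (n k : ℝ) ∧
      (h z ≠ 0 →
        r k ^ (n (k - 1)) / (4 * Real.pi)
          ≤ (1 / ‖h z‖) * ((n k : ℝ) / (4 * Real.pi))) := by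
  -- growth of r
  have rgrow : ∀ i j, 1 ≤ i → i ≤ j → (2:ℝ) ^ (j - i) * r i ≤ r j := by
    intro i j hi hij
    induction j with
    | zero => omega
    | succ j ih =>
      rcases Nat.lt_or_ge i (j + 1) with hlt | hge
      · have hij' : i ≤ j := by omega
        have h1 := ih hij'
        have h2 := hr (j + 1) (by omega)
        have hj : j + 1 - 1 = j := rfl
        rw [hj] at h2
        have hexp : j + 1 - i = (j - i) + 1 := by omega
        rw [hexp, pow_succ]
        calc (2:ℝ) ^ (j - i) * 2 * r i = 2 * ((2:ℝ) ^ (j - i) * r i) := by ring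
          _ ≤ 2 * r j := by linarith
          _ ≤ r (j + 1) := h2
      · have hij2 : i = j + 1 := by omega
        subst hij2
        simp
  have rge1 : ∀ j, 1 ≤ j → 1 ≤ r j := by
    intro j hj
    have h1 := rgrow 1 j le_rfl hj
    have h2 : (1:ℝ) ≤ 2 ^ (j - 1) := one_le_pow₀ (by norm_num)
    nlinarith
  have rmono : ∀ i j, 1 ≤ i → i ≤ j → r i ≤ r j := by
    intro i j hi hij
    have h1 := rgrow i j hi hij
    have h2 : (1:ℝ) ≤ 2 ^ (j - i) := one_le_pow₀ (by norm_num)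
    nlinarith [hrpos i hi]
  intro k hk z hz
  obtain ⟨K, rfl⟩ : ∃ K, k = K + 3 := ⟨k - 3, by omega⟩
  have e1 : K + 3 - 1 = K + 2 := rfl
  have hrk0 : 0 < r (K + 3) := hrpos _ (by omega)
  have hrk1 : 1 ≤ r (K + 3) := rge1 _ (by omega)
  -- 2^(K+2) ≤ r (K+3)
  have hrk2 : (2:ℝ) ^ (K + 2) ≤ r (K + 3) := by
    have h1 := rgrow 1 (K + 3) le_rfl (by omega)
    have e : K + 3 - 1 = K + 2 := rfl
    rw [e] at h1
    nlinarith [pow_pos (by norm_num : (0:ℝ) < 2) (K + 2)]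
  -- 16 ≤ n (K+2)
  have hn16 : 16 ≤ n (K + 2) := by
    have h1 := hnr (K + 2) (by omega)
    have e : K + 2 - 1 = K + 1 := rfl
    rw [e] at h1
    have hr2 : (2:ℝ) ≤ r (K + 2) := by
      have := rgrow 1 (K + 2) le_rfl (by omega)
      have e2 : K + 2 - 1 = K + 1 := rfl
      rw [e2] at this
      have h2 : (2:ℝ) ≤ 2 ^ (K + 1) := by
        calc (2:ℝ) = 2 ^ 1 := (pow_one 2).symm
          _ ≤ 2 ^ (K + 1) := pow_le_pow_right₀ (by norm_num) (by omega)
      nlinarith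
    have hn1 : 1 ≤ n (K + 1) := hnpos _ (by omega)
    have h3 : (2:ℝ) ^ 4 ≤ (2:ℝ) ^ (4 * n (K + 1)) :=
      pow_le_pow_right₀ (by norm_num) (by omega)
    have h4 : (2:ℝ) ^ (4 * n (K + 1)) ≤ r (K + 2) ^ (4 * n (K + 1)) :=
      pow_le_pow_left₀ (by norm_num) hr2 _
    have h5 : (16:ℝ) ≤ (n (K + 2) : ℝ) := by norm_num at h3; linarith
    exact_mod_cast h5
  -- key numeric inequality : 3 * 2^(K+3) ≤ r(K+3)^(n (K+2))
  have hkey3 : (3:ℝ) * 2 ^ (K + 3) ≤ r (K + 3) ^ (n (K + 2)) := by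
    have hb2 : ((2:ℝ) ^ (K + 2)) ^ 16 ≤ r (K + 3) ^ 16 :=
      pow_le_pow_left₀ (by positivity) hrk2 16
    have hb3 : r (K + 3) ^ 16 ≤ r (K + 3) ^ (n (K + 2)) :=
      pow_le_pow_right₀ hrk1 hn16
    have hb4 : ((2:ℝ) ^ (K + 2)) ^ 16 = 2 ^ ((K + 2) * 16) := (pow_mul 2 (K + 2) 16).symm
    have hb5 : (2:ℝ) ^ (K + 5) ≤ 2 ^ ((K + 2) * 16) :=
      pow_le_pow_right₀ (by norm_num) (by omega)
    have hb6 : (3:ℝ) * 2 ^ (K + 3) ≤ 2 ^ (K + 5) := by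
      have : (2:ℝ) ^ (K + 5) = 2 ^ (K + 3) * 4 := by rw [pow_add, pow_add]; ring
      have hp : (0:ℝ) < 2 ^ (K + 3) := pow_pos (by norm_num) _
      nlinarith
    calc (3:ℝ) * 2 ^ (K + 3) ≤ 2 ^ (K + 5) := hb6
      _ ≤ 2 ^ ((K + 2) * 16) := hb5
      _ = ((2:ℝ) ^ (K + 2)) ^ 16 := hb4.symm
      _ ≤ r (K + 3) ^ 16 := hb2
      _ ≤ r (K + 3) ^ (n (K + 2)) := hb3
  -- sum of exponents bound
  have hIccIoc : ∀ m : ℕ, Finset.Ioc 0 m = Finset.Icc 1 m := by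
    intro m; ext x; simp [Finset.mem_Ioc, Finset.mem_Icc]; omega
  have hS : ∑ j ∈ Finset.Ioc 0 (K + 2), n j ≤ 2 * n (K + 2) := by
    rw [hIccIoc]
    have h1 : ∑ j ∈ Finset.Icc 1 (K + 2), n j
        = (∑ j ∈ Finset.Icc 1 (K + 1), n j) + n (K + 2) :=
      Finset.sum_Icc_succ_top (by omega) n
    have h2 := hnsum (K + 2) (by omega)
    have e : K + 2 - 1 = K + 1 := rfl
    rw [e] at h2
    omega
  -- the factor-wise bound function
  set F : ℕ → ℝ := fun j => 1 + (r (K + 3) / r j) ^ (n j) with hF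
  have hFnonneg : ∀ j, 1 ≤ j → 0 ≤ F j := by
    intro j hj
    have hrj := hrpos j hj
    have : (0:ℝ) ≤ (r (K + 3) / r j) ^ (n j) := by positivity
    simp only [hF]; linarith
  -- tail sum bound
  have hsum : ∀ m, K + 3 ≤ m →
      ∑ j ∈ Finset.Ioc (K + 3) m, (1/2 : ℝ) ^ (j - (K + 3)) ≤ 1 - (1/2) ^ (m - (K + 3)) := by
    intro m hm
    induction m, hm using Nat.le_induction with
    | base => simp
    | succ m hm ih =>
      rw [Finset.sum_Ioc_succ_top hm]
      have e : m + 1 - (K + 3) = (m - (K + 3)) + 1 := by omega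
      rw [e, pow_succ]
      linarith
  -- tail product bound
  have htail : ∀ m, K + 3 ≤ m → ∏ j ∈ Finset.Ioc (K + 3) m, F j ≤ 3 := by
    intro m hm
    have step : ∀ j ∈ Finset.Ioc (K + 3) m, F j ≤ Real.exp ((1/2 : ℝ) ^ (j - (K + 3))) := by
      intro j hj
      rw [Finset.mem_Ioc] at hj
      have hj1 : 1 ≤ j := by omega
      have hrj : 0 < r j := hrpos j hj1
      have hd := rgrow (K + 3) j (by omega) hj.1.le
      have hpow : (0:ℝ) < 2 ^ (j - (K + 3)) := pow_pos (by norm_num) _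
      have hx1 : r (K + 3) / r j ≤ (1/2 : ℝ) ^ (j - (K + 3)) := by
        rw [div_pow, one_pow, div_le_div_iff₀ hrj hpow]
        nlinarith
      have hx0 : 0 ≤ r (K + 3) / r j := by positivity
      have hxle1 : r (K + 3) / r j ≤ 1 := by
        have : (1/2 : ℝ) ^ (j - (K + 3)) ≤ 1 := pow_le_one₀ (by norm_num) (by norm_num)
        linarith
      have hxp : (r (K + 3) / r j) ^ (n j) ≤ r (K + 3) / r j := by
        calc (r (K + 3) / r j) ^ (n j) ≤ (r (K + 3) / r j) ^ 1 :=
              pow_le_pow_of_le_one hx0 hxle1 (hnpos j hj1)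
          _ = r (K + 3) / r j := pow_one _
      have : F j ≤ 1 + (1/2 : ℝ) ^ (j - (K + 3)) := by
        simp only [hF]; linarith
      calc F j ≤ 1 + (1/2 : ℝ) ^ (j - (K + 3)) := this
        _ ≤ Real.exp ((1/2 : ℝ) ^ (j - (K + 3))) := by
            have := Real.add_one_le_exp ((1/2 : ℝ) ^ (j - (K + 3)))
            linarith
    have h1 : ∏ j ∈ Finset.Ioc (K + 3) m, F j
        ≤ ∏ j ∈ Finset.Ioc (K + 3) m, Real.exp ((1/2 : ℝ) ^ (j - (K + 3))) := by
      apply Finset.prod_le_prod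
      · intro j hj
        rw [Finset.mem_Ioc] at hj
        exact hFnonneg j (by omega)
      · exact step
    have h2 : ∏ j ∈ Finset.Ioc (K + 3) m, Real.exp ((1/2 : ℝ) ^ (j - (K + 3)))
        = Real.exp (∑ j ∈ Finset.Ioc (K + 3) m, (1/2 : ℝ) ^ (j - (K + 3))) :=
      (Real.exp_sum _ _).symm
    have h3 : Real.exp (∑ j ∈ Finset.Ioc (K + 3) m, (1/2 : ℝ) ^ (j - (K + 3)))
        ≤ Real.exp 1 := by
      apply Real.exp_le_exp.2
      have := hsum m hm
      have hp : (0:ℝ) ≤ (1/2 : ℝ) ^ (m - (K + 3)) := by positivity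
      linarith
    have h4 : Real.exp 1 < 3 := by
      have := Real.exp_one_lt_d9; linarith
    calc ∏ j ∈ Finset.Ioc (K + 3) m, F j
        ≤ Real.exp (∑ j ∈ Finset.Ioc (K + 3) m, (1/2 : ℝ) ^ (j - (K + 3))) := h2 ▸ h1
      _ ≤ Real.exp 1 := h3
      _ ≤ 3 := h4.le
  -- head product bound
  have hhead : ∏ j ∈ Finset.Ioc 0 (K + 3), F j
      ≤ 2 ^ (K + 3) * r (K + 3) ^ (2 * n (K + 2)) := by
    have hsplit : ∏ j ∈ Finset.Ioc 0 (K + 3), F j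
        = (∏ j ∈ Finset.Ioc 0 (K + 2), F j) * F (K + 3) :=
      Finset.prod_Ioc_succ_top (by omega) F
    have hFk : F (K + 3) = 2 := by
      simp only [hF, div_self hrk0.ne', one_pow]
      norm_num
    have hstep : ∏ j ∈ Finset.Ioc 0 (K + 2), F j
        ≤ ∏ j ∈ Finset.Ioc 0 (K + 2), (2 * r (K + 3) ^ (n j)) := by
      apply Finset.prod_le_prod
      · intro j hj
        rw [Finset.mem_Ioc] at hj
        exact hFnonneg j (by omega)
      · intro j hj
        rw [Finset.mem_Ioc] at hj
        have hj1 : 1 ≤ j := by omega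
        have hrj1 : 1 ≤ r j := rge1 j hj1
        have hx0 : 0 ≤ r (K + 3) / r j := by positivity
        have hxle : r (K + 3) / r j ≤ r (K + 3) := by
          apply div_le_self hrk0.le hrj1
        have h1 : (r (K + 3) / r j) ^ (n j) ≤ r (K + 3) ^ (n j) :=
          pow_le_pow_left₀ hx0 hxle _
        have h2 : (1:ℝ) ≤ (r (K + 3) / r j) ^ (n j) := by
          apply one_le_pow₀
          rw [le_div_iff₀ (hrpos j hj1)]
          have := rmono j (K + 3) hj1 (by omega)
          linarith
        simp only [hF]
        linarith
    have hprod : ∏ j ∈ Finset.Ioc 0 (K + 2), (2 * r (K + 3) ^ (n j))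
        = 2 ^ (K + 2) * r (K + 3) ^ (∑ j ∈ Finset.Ioc 0 (K + 2), n j) := by
      rw [Finset.prod_mul_distrib, Finset.prod_const, Finset.prod_pow_eq_pow_sum,
        Nat.card_Ioc]
      norm_num
    have hrS : r (K + 3) ^ (∑ j ∈ Finset.Ioc 0 (K + 2), n j)
        ≤ r (K + 3) ^ (2 * n (K + 2)) := pow_le_pow_right₀ hrk1 hS
    have hp2 : (0:ℝ) < 2 ^ (K + 2) := pow_pos (by norm_num) _
    calc ∏ j ∈ Finset.Ioc 0 (K + 3), F j
        = (∏ j ∈ Finset.Ioc 0 (K + 2), F j) * F (K + 3) := hsplit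
      _ = (∏ j ∈ Finset.Ioc 0 (K + 2), F j) * 2 := by rw [hFk]
      _ ≤ (2 ^ (K + 2) * r (K + 3) ^ (∑ j ∈ Finset.Ioc 0 (K + 2), n j)) * 2 := by
          apply mul_le_mul_of_nonneg_right _ (by norm_num)
          rw [← hprod]; exact hstep
      _ ≤ (2 ^ (K + 2) * r (K + 3) ^ (2 * n (K + 2))) * 2 := by
          apply mul_le_mul_of_nonneg_right _ (by norm_num)
          exact mul_le_mul_of_nonneg_left hrS hp2.le
      _ = 2 ^ (K + 3) * r (K + 3) ^ (2 * n (K + 2)) := by rw [pow_succ]; ring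
  -- bound on partial products
  have key : ∀ m, K + 3 ≤ m →
      ‖∏ j ∈ Finset.Icc 1 m, (1 + (z / (r j : ℂ)) ^ (n j))‖
        ≤ 3 * 2 ^ (K + 3) * r (K + 3) ^ (2 * n (K + 2)) := by
    intro m hm
    have habs : ‖∏ j ∈ Finset.Icc 1 m, (1 + (z / (r j : ℂ)) ^ (n j))‖
        = ∏ j ∈ Finset.Icc 1 m, ‖1 + (z / (r j : ℂ)) ^ (n j)‖ :=
      norm_prod _ _
    have hfac : ∀ j ∈ Finset.Icc 1 m,
        ‖1 + (z / (r j : ℂ)) ^ (n j)‖ ≤ F j := by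
      intro j hj
      rw [Finset.mem_Icc] at hj
      have hrj : 0 < r j := hrpos j hj.1
      have h1 : ‖(z / (r j : ℂ)) ^ (n j)‖ = (r (K + 3) / r j) ^ (n j) := by
        rw [norm_pow, norm_div, hz, Complex.norm_real, Real.norm_of_nonneg hrj.le]
      calc ‖1 + (z / (r j : ℂ)) ^ (n j)‖
          ≤ ‖(1:ℂ)‖ + ‖(z / (r j : ℂ)) ^ (n j)‖ := norm_add_le _ _
        _ = F j := by rw [norm_one, h1]
    have h2 : ∏ j ∈ Finset.Icc 1 m, ‖1 + (z / (r j : ℂ)) ^ (n j)‖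
        ≤ ∏ j ∈ Finset.Icc 1 m, F j :=
      Finset.prod_le_prod (fun j _ => norm_nonneg _) hfac
    have hIoc : ∏ j ∈ Finset.Icc 1 m, F j = ∏ j ∈ Finset.Ioc 0 m, F j := by
      rw [hIccIoc]
    have hsplit : (∏ j ∈ Finset.Ioc 0 (K + 3), F j) * ∏ j ∈ Finset.Ioc (K + 3) m, F j
        = ∏ j ∈ Finset.Ioc 0 m, F j :=
      Finset.prod_Ioc_consecutive F (by omega) hm
    have hheadnn : 0 ≤ ∏ j ∈ Finset.Ioc 0 (K + 3), F j :=
      Finset.prod_nonneg (fun j hj => hFnonneg j (by rw [Finset.mem_Ioc] at hj; omega))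
    have htailnn : 0 ≤ ∏ j ∈ Finset.Ioc (K + 3) m, F j :=
      Finset.prod_nonneg (fun j hj => hFnonneg j (by rw [Finset.mem_Ioc] at hj; omega))
    calc ‖∏ j ∈ Finset.Icc 1 m, (1 + (z / (r j : ℂ)) ^ (n j))‖
        ≤ ∏ j ∈ Finset.Icc 1 m, F j := by rw [habs]; exact h2
      _ = (∏ j ∈ Finset.Ioc 0 (K + 3), F j) * ∏ j ∈ Finset.Ioc (K + 3) m, F j := by
          rw [hIoc, ← hsplit]
      _ ≤ (2 ^ (K + 3) * r (K + 3) ^ (2 * n (K + 2))) * 3 := by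
          apply mul_le_mul hhead (htail m hm) htailnn (by positivity)
      _ = 3 * 2 ^ (K + 3) * r (K + 3) ^ (2 * n (K + 2)) := by ring
  -- pass to the limit
  have hlim : ‖h z‖ ≤ 3 * 2 ^ (K + 3) * r (K + 3) ^ (2 * n (K + 2)) := by
    have ht : Tendsto
        (fun m : ℕ => ‖∏ j ∈ Finset.Icc 1 m, (1 + (z / (r j : ℂ)) ^ (n j))‖)
        atTop (nhds (‖h z‖)) := by
      have := (hh z).norm
      exact this
    exact le_of_tendsto ht (Filter.eventually_atTop.2 ⟨K + 3, key⟩)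
  -- assemble part 1
  have part1 : ‖h z‖ * r (K + 3) ^ (n (K + 2)) ≤ (n (K + 3) : ℝ) := by
    have hpn : (0:ℝ) ≤ r (K + 3) ^ (n (K + 2)) := by positivity
    have step1 : ‖h z‖ * r (K + 3) ^ (n (K + 2))
        ≤ (3 * 2 ^ (K + 3) * r (K + 3) ^ (2 * n (K + 2))) * r (K + 3) ^ (n (K + 2)) :=
      mul_le_mul_of_nonneg_right hlim hpn
    have e2 : (3 * 2 ^ (K + 3) * r (K + 3) ^ (2 * n (K + 2))) * r (K + 3) ^ (n (K + 2))
        = (3 * 2 ^ (K + 3)) * r (K + 3) ^ (3 * n (K + 2)) := by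
      rw [mul_assoc, ← pow_add]
      congr 2
      omega
    have step2 : (3 * 2 ^ (K + 3)) * r (K + 3) ^ (3 * n (K + 2))
        ≤ r (K + 3) ^ (n (K + 2)) * r (K + 3) ^ (3 * n (K + 2)) :=
      mul_le_mul_of_nonneg_right hkey3 (by positivity)
    have e3 : r (K + 3) ^ (n (K + 2)) * r (K + 3) ^ (3 * n (K + 2))
        = r (K + 3) ^ (4 * n (K + 2)) := by
      rw [← pow_add]; congr 1; omega
    have step3 : r (K + 3) ^ (4 * n (K + 2)) ≤ (n (K + 3) : ℝ) := by
      have := hnr (K + 3) (by omega)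
      rwa [e1] at this
    calc ‖h z‖ * r (K + 3) ^ (n (K + 2))
        ≤ (3 * 2 ^ (K + 3)) * r (K + 3) ^ (3 * n (K + 2)) := by rw [← e2]; exact step1
      _ ≤ r (K + 3) ^ (n (K + 2)) * r (K + 3) ^ (3 * n (K + 2)) := step2
      _ = r (K + 3) ^ (4 * n (K + 2)) := e3
      _ ≤ (n (K + 3) : ℝ) := step3
  refine ⟨by rw [e1]; exact part1, ?_⟩
  intro hne
  rw [e1]
  have ha : 0 < ‖h z‖ := norm_pos_iff.2 hne
  have hπ : 0 < Real.pi := Real.pi_pos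
  have heq : (1 / ‖h z‖) * ((n (K + 3) : ℝ) / (4 * Real.pi))
      = (n (K + 3) : ℝ) / (‖h z‖ * (4 * Real.pi)) := by
    field_simp
  rw [heq, div_le_div_iff₀ (by positivity) (by positivity)]
  calc r (K + 3) ^ (n (K + 2)) * (‖h z‖ * (4 * Real.pi))
      = (‖h z‖ * r (K + 3) ^ (n (K + 2))) * (4 * Real.pi) := by ring
    _ ≤ (n (K + 3) : ℝ) * (4 * Real.pi) :=
        mul_le_mul_of_nonneg_right part1 (by positivity)
end

section
/- Since h(0) = 1, there is an entire function H with z·H(z) = h(z) − 1 for all z ∈ ℂ. Let G be the entire primitive of H with G(0) = 0 and define g(z) := z·exp(G(z)). Then g is entire, g(z) = 0 if and only if z = 0 (and this zero is simple, since g'(0) = 1), one has z·g'(z) = g(z)·h(z) for all z, and for every z ≠ 0 with h(z) ≠ 0 the Newton function satisfies N_g(z) := z − g(z)/g'(z) = z(1 − 1/h(z)). -/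
open Filter Topology

/-- Since `h(0) = 1`, there is an entire `H` with `z·H(z) = h(z) - 1`. For any
entire primitive `G` of `H` with `G(0) = 0`, the function `g(z) = z·exp(G(z))`
is entire, vanishes exactly at `0` (with `g'(0) = 1`, so the zero is simple),
satisfies `z·g'(z) = g(z)·h(z)`, and for `z ≠ 0` with `h(z) ≠ 0` the Newton
function satisfies `N_g(z) = z - g(z)/g'(z) = z(1 - 1/h(z))`. -/
theorem newton_function_of_g
    (r : ℕ → ℝ) (n : ℕ → ℕ) (h : ℂ → ℂ)
    (hrpos : ∀ k, 1 ≤ k → 0 < r k)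
    (hrinf : Tendsto r atTop atTop)
    (hn : ∀ k, 1 ≤ k → k ≤ n k)
    (hdiff : Differentiable ℂ h)
    (hh : ∀ z : ℂ, Tendsto
      (fun m : ℕ => ∏ k ∈ Finset.Icc 1 m, (1 + (z / (r k : ℂ)) ^ (n k)))
      atTop (nhds (h z))) :
    ∃ H : ℂ → ℂ, Differentiable ℂ H ∧ (∀ z : ℂ, z * H z = h z - 1) ∧
      ∀ G : ℂ → ℂ, (∀ z : ℂ, HasDerivAt G (H z) z) → G 0 = 0 →
        ∀ g : ℂ → ℂ, (∀ z : ℂ, g z = z * Complex.exp (G z)) →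
          Differentiable ℂ g ∧
          (∀ z : ℂ, g z = 0 ↔ z = 0) ∧
          deriv g 0 = 1 ∧
          (∀ z : ℂ, z * deriv g z = g z * h z) ∧
          (∀ z : ℂ, z ≠ 0 → h z ≠ 0 →
            z - g z / deriv g z = z * (1 - 1 / h z)) := by
  -- h 0 = 1
  have h0 : h 0 = 1 := by
    have : Tendsto (fun _ : ℕ => (1 : ℂ)) atTop (nhds (h 0)) := by
      have := hh 0
      refine this.congr fun m => ?_
      refine Finset.prod_eq_one fun k hk => ?_
      have hk1 : 1 ≤ k := (Finset.mem_Icc.mp hk).1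
      have : (0 : ℂ) / (r k : ℂ) = 0 := zero_div _
      have hnk := hn k hk1
      rw [this, zero_pow (by omega : n k ≠ 0), add_zero]
    exact tendsto_nhds_unique this tendsto_const_nhds
  refine ⟨dslope h 0, ?_, ?_, ?_⟩
  · have : DifferentiableOn ℂ (dslope h 0) Set.univ :=
      (Complex.differentiableOn_dslope (by simp)).mpr hdiff.differentiableOn
    exact fun z => (this z (Set.mem_univ z)).differentiableAt (by simp)
  · intro z
    have := sub_smul_dslope h 0 z
    simp only [sub_zero, smul_eq_mul] at this
    rw [this, h0]
  · intro G hG hG0 g hg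
    have hexp : ∀ z : ℂ, Complex.exp (G z) ≠ 0 := fun z => Complex.exp_ne_zero _
    have hzH : ∀ z : ℂ, z * dslope h 0 z = h z - 1 := by
      intro z
      have := sub_smul_dslope h 0 z
      simp only [sub_zero, smul_eq_mul] at this
      rw [this, h0]
    have hderiv : ∀ z : ℂ, HasDerivAt g (Complex.exp (G z) * h z) z := by
      intro z
      have h1 : HasDerivAt (fun w : ℂ => w * Complex.exp (G w))
          (1 * Complex.exp (G z) + z * (Complex.exp (G z) * dslope h 0 z)) z :=
        (hasDerivAt_id z).mul ((hG z).cexp)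
      have h2 : HasDerivAt g
          (1 * Complex.exp (G z) + z * (Complex.exp (G z) * dslope h 0 z)) z := by
        refine h1.congr_of_eventuallyEq ?_
        filter_upwards with w using (hg w)
      convert h2 using 1
      have : z * (Complex.exp (G z) * dslope h 0 z)
          = Complex.exp (G z) * (z * dslope h 0 z) := by ring
      rw [this, hzH z]
      ring
    have hderiv' : ∀ z : ℂ, deriv g z = Complex.exp (G z) * h z :=
      fun z => (hderiv z).deriv
    refine ⟨fun z => (hderiv z).differentiableAt, ?_, ?_, ?_, ?_⟩
    · intro z
      rw [hg z]
      simp [hexp z]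
    · rw [hderiv' 0, hG0, h0]
      simp
    · intro z
      rw [hderiv' z, hg z]
      ring
    · intro z hz hhz
      rw [hderiv' z, hg z]
      field_simp
end
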